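/- Let ε ∈ Sym₂(ℝ²), ϑ ∈ ℝ², and suppose h(ε,ϑ) := sup_{|τ|≤1, ψ∈ℝ} (ε:(τ⊗τ) + ψ·(ϑ·τ))/(1+ψ²) satisfies h(ε,ϑ) = 1. Set z := (1/2)ϑ and G := I + z⊗z. Then γ_{z,+}(ε + z ⊗ₛ ϑ) = 1, where γ_{z,+}(ξ) := sup{ξ:(τ⊗τ) : τ ∈ ℝ², G:(τ⊗τ) ≤ 1} and z ⊗ₛ ϑ = (z⊗ϑ + ϑ⊗z)/2. -/

import Mathlib

open Matrix

/-- Frobenius inner product of 2×2 matrices. -/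
def frob2 (A B : Matrix (Fin 2) (Fin 2) ℝ) : ℝ := ∑ i, ∑ j, A i j * B i j


private lemma auxA (e0 e1 e2 v0 v1 t0 t1 : ℝ)
    (hub : ∀ s0 s1 ψ : ℝ, s0^2 + s1^2 ≤ 1 →
      (e0*s0^2 + e1*(s0*s1) + e2*s1^2 + ψ*(v0*s0 + v1*s1)) / (1+ψ^2) ≤ 1)
    (hG : t0^2 + t1^2 + ((v0*t0 + v1*t1)/2)^2 ≤ 1) :
    e0*t0^2 + e1*(t0*t1) + e2*t1^2 + (v0*t0 + v1*t1)^2/2 ≤ 1 := by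
  obtain ⟨t, h2t⟩ : ∃ t : ℝ, v0*t0 + v1*t1 = 2*t := ⟨(v0*t0 + v1*t1)/2, by ring⟩
  rw [h2t] at hG ⊢
  by_cases h0 : t0 = 0 ∧ t1 = 0
  · obtain ⟨h1, h2⟩ := h0
    subst h1; subst h2
    have ht : t = 0 := by
      have := h2t; nlinarith [h2t]
    subst ht; norm_num
  · have hpos : 0 < t0^2 + t1^2 := by
      rcases not_and_or.mp h0 with h | h
      · positivity
      · positivity
    have ht1 : t^2 < 1 := by nlinarith [hG]
    have hC : 0 < 1 - t^2 := by linarith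
    obtain ⟨c, hc2⟩ : ∃ c : ℝ, c^2 = 1/(1-t^2) :=
      ⟨Real.sqrt (1/(1-t^2)), Real.sq_sqrt (by positivity)⟩
    have hc2pos : 0 < c^2 := by rw [hc2]; positivity
    have hc2' : c^2 * (1-t^2) = 1 := by rw [hc2]; field_simp
    have hfe : t0^2 + t1^2 ≤ 1 - t^2 := by nlinarith [hG]
    have hcon : (c*t0)^2 + (c*t1)^2 ≤ 1 := by
      nlinarith [mul_le_mul_of_nonneg_left hfe hc2pos.le, hc2']
    have hkey := hub (c*t0) (c*t1) (c*t) hcon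
    rw [div_le_one (by positivity)] at hkey
    have hv : v0*(c*t0) + v1*(c*t1) = c*(2*t) := by linear_combination c*h2t
    rw [hv] at hkey
    nlinarith [hkey, hc2', hc2pos]

set_option maxHeartbeats 1000000 in
private lemma auxB (e0 e1 e2 v0 v1 t0 t1 ψ δ : ℝ)
    (hδ : 0 < δ) (hδ4 : δ ≤ 1/4)
    (hs : t0^2 + t1^2 ≤ 1)
    (hub : ∀ s0 s1 χ : ℝ, s0^2 + s1^2 ≤ 1 →
      (e0*s0^2 + e1*(s0*s1) + e2*s1^2 + χ*(v0*s0 + v1*s1)) / (1+χ^2) ≤ 1)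
    (hx : 1 - δ < (e0*t0^2 + e1*(t0*t1) + e2*t1^2 + ψ*(v0*t0 + v1*t1)) / (1+ψ^2)) :
    ∃ s0 s1 : ℝ, s0^2 + s1^2 + ((v0*s0 + v1*s1)/2)^2 ≤ 1 ∧
      1 - δ*(4*((|v0|+|v1|)/2)^2 + 2) ≤
        e0*s0^2 + e1*(s0*s1) + e2*s1^2 + (v0*s0 + v1*s1)^2/2 := by
  obtain ⟨t, h2t⟩ : ∃ t : ℝ, v0*t0 + v1*t1 = 2*t := ⟨(v0*t0 + v1*t1)/2, by ring⟩
  obtain ⟨a, ha⟩ : ∃ a : ℝ, e0*t0^2 + e1*(t0*t1) + e2*t1^2 = a := ⟨_, rfl⟩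
  rw [h2t, ha] at hx
  set K := ((|v0|+|v1|)/2)^2 with hKdef
  have hK0 : 0 ≤ K := hKdef ▸ by positivity
  clear_value K
  -- E1 : a + t^2 ≤ 1
  have hE1' := hub t0 t1 t hs
  rw [div_le_one (by positivity), h2t, ha] at hE1'
  have hE1 : a + t^2 ≤ 1 := by nlinarith [hE1']
  -- E2
  rw [lt_div_iff₀ (by positivity)] at hx
  have hE2 : (1-δ)*(1+ψ^2) < a + 2*ψ*t := by nlinarith [hx]
  -- E3 : ψ^2 ≤ 4 t^2 + 1
  have hE3 : ψ^2 ≤ 4*t^2 + 1 := by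
    nlinarith [sq_nonneg (ψ - 2*t), mul_nonneg (by linarith : (0:ℝ) ≤ 1/4 - δ) (sq_nonneg ψ)]
  -- E4 : t^2 ≤ K
  have hE4 : t^2 ≤ K := by
    have hcs : (v0*t0 + v1*t1)^2 ≤ (v0^2 + v1^2)*(t0^2 + t1^2) := by
      nlinarith [sq_nonneg (v0*t1 - v1*t0)]
    have h1 : (v0^2 + v1^2)*(t0^2 + t1^2) ≤ v0^2 + v1^2 := by
      nlinarith [mul_nonneg (by linarith : (0:ℝ) ≤ 1 - (t0^2+t1^2))
        (by positivity : (0:ℝ) ≤ v0^2 + v1^2)]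
    have h2 : v0^2 + v1^2 ≤ (|v0|+|v1|)^2 := by
      nlinarith [mul_nonneg (abs_nonneg v0) (abs_nonneg v1), sq_abs v0, sq_abs v1]
    have h2t2 : (v0*t0 + v1*t1)^2 = 4*t^2 := by rw [h2t]; ring
    rw [hKdef]
    nlinarith [h2t2, hcs, h1, h2]
  -- E5
  have hE5 : 1 - t^2 - a ≤ δ*(1+ψ^2) := by linarith [sq_nonneg (ψ - t), hE2]
  have hE1n : 0 ≤ 1 - t^2 - a := by linarith
  -- construction
  obtain ⟨r, hr2⟩ : ∃ r : ℝ, r^2 = 1/(1+t^2) :=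
    ⟨Real.sqrt (1/(1+t^2)), Real.sq_sqrt (by positivity)⟩
  have hr2pos : 0 < r^2 := by rw [hr2]; positivity
  have hr2' : r^2 * (1+t^2) = 1 := by rw [hr2]; field_simp
  have hrle : r^2 ≤ 1 := by linarith [hr2', mul_nonneg hr2pos.le (sq_nonneg t)]
  have hv : v0*(r*t0) + v1*(r*t1) = r*(2*t) := by linear_combination r*h2t
  clear hub hx hE1' hE2
  refine ⟨r*t0, r*t1, ?_, ?_⟩
  · rw [hv]
    nlinarith [mul_le_mul_of_nonneg_left hs hr2pos.le, hr2']
  · rw [hv]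
    have hyval : e0*(r*t0)^2 + e1*((r*t0)*(r*t1)) + e2*(r*t1)^2 + (r*(2*t))^2/2
        = r^2*(a + 2*t^2) := by linear_combination (r^2) * ha
    rw [hyval]
    have key1 : 1 - r^2*(a + 2*t^2) = r^2*(1-t^2-a) := by linear_combination -hr2'
    have key2 : r^2*(1-t^2-a) ≤ 1-t^2-a := by
      nlinarith [mul_nonneg (by linarith : (0:ℝ) ≤ 1 - r^2) hE1n]
    have key3 : δ*(1+ψ^2) ≤ δ*(4*K+2) := by nlinarith [hE3, hE4, hδ]
    linarith

/-- If h(ε,ϑ) = 1 then, with z = (1/2)ϑ and G = I + z⊗z,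
    γ_{z,+}(ε + z ⊗ₛ ϑ) = sup{(ε + z⊗ₛϑ):(τ⊗τ) : G:(τ⊗τ) ≤ 1} = 1. -/
theorem stmt19 (ε : Matrix (Fin 2) (Fin 2) ℝ) (ϑ : Fin 2 → ℝ) (hε : ε.IsHermitian)
    (hh : sSup {x : ℝ | ∃ τ : Fin 2 → ℝ, ∃ ψ : ℝ, (∑ i, τ i ^ 2) ≤ 1 ∧
        x = (frob2 ε (Matrix.vecMulVec τ τ) + ψ * (ϑ ⬝ᵥ τ)) / (1 + ψ ^ 2)} = 1) :
    sSup {y : ℝ | ∃ τ : Fin 2 → ℝ,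
        frob2 ((1 : Matrix (Fin 2) (Fin 2) ℝ) +
            Matrix.vecMulVec ((1/2 : ℝ) • ϑ) ((1/2 : ℝ) • ϑ))
          (Matrix.vecMulVec τ τ) ≤ 1 ∧
        y = frob2 (ε + (1/2 : ℝ) •
            (Matrix.vecMulVec ((1/2 : ℝ) • ϑ) ϑ +
              Matrix.vecMulVec ϑ ((1/2 : ℝ) • ϑ)))
          (Matrix.vecMulVec τ τ)} = 1 := by
  classical
  set X := {x : ℝ | ∃ τ : Fin 2 → ℝ, ∃ ψ : ℝ, (∑ i, τ i ^ 2) ≤ 1 ∧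
      x = (frob2 ε (Matrix.vecMulVec τ τ) + ψ * (ϑ ⬝ᵥ τ)) / (1 + ψ ^ 2)} with hXdef
  set Y := {y : ℝ | ∃ τ : Fin 2 → ℝ,
      frob2 ((1 : Matrix (Fin 2) (Fin 2) ℝ) +
          Matrix.vecMulVec ((1/2 : ℝ) • ϑ) ((1/2 : ℝ) • ϑ))
        (Matrix.vecMulVec τ τ) ≤ 1 ∧
      y = frob2 (ε + (1/2 : ℝ) •
          (Matrix.vecMulVec ((1/2 : ℝ) • ϑ) ϑ +
            Matrix.vecMulVec ϑ ((1/2 : ℝ) • ϑ)))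
        (Matrix.vecMulVec τ τ)} with hYdef
  -- scalarizations
  have hfa : ∀ τ : Fin 2 → ℝ, frob2 ε (Matrix.vecMulVec τ τ)
      = ε 0 0 * (τ 0)^2 + (ε 0 1 + ε 1 0) * (τ 0 * τ 1) + ε 1 1 * (τ 1)^2 := by
    intro τ; simp [frob2, Matrix.vecMulVec, Fin.sum_univ_two]; ring
  have hdot : ∀ τ : Fin 2 → ℝ, ϑ ⬝ᵥ τ = ϑ 0 * τ 0 + ϑ 1 * τ 1 := by
    intro τ; simp [dotProduct, Fin.sum_univ_two]
  have hsum : ∀ τ : Fin 2 → ℝ, (∑ i, τ i ^ 2) = (τ 0)^2 + (τ 1)^2 := fun τ =>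
    Fin.sum_univ_two _
  have hGf : ∀ τ : Fin 2 → ℝ, frob2 ((1 : Matrix (Fin 2) (Fin 2) ℝ) +
        Matrix.vecMulVec ((1/2 : ℝ) • ϑ) ((1/2 : ℝ) • ϑ)) (Matrix.vecMulVec τ τ)
      = (τ 0)^2 + (τ 1)^2 + ((ϑ 0 * τ 0 + ϑ 1 * τ 1)/2)^2 := by
    intro τ
    simp [frob2, Matrix.vecMulVec, Fin.sum_univ_two, Matrix.add_apply, Matrix.one_apply,
      Pi.smul_apply, smul_eq_mul]
    ring
  have hYf : ∀ τ : Fin 2 → ℝ, frob2 (ε + (1/2 : ℝ) •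
        (Matrix.vecMulVec ((1/2 : ℝ) • ϑ) ϑ + Matrix.vecMulVec ϑ ((1/2 : ℝ) • ϑ)))
        (Matrix.vecMulVec τ τ)
      = ε 0 0 * (τ 0)^2 + (ε 0 1 + ε 1 0) * (τ 0 * τ 1) + ε 1 1 * (τ 1)^2
        + (ϑ 0 * τ 0 + ϑ 1 * τ 1)^2/2 := by
    intro τ
    simp [frob2, Matrix.vecMulVec, Fin.sum_univ_two, Matrix.add_apply,
      Pi.smul_apply, smul_eq_mul]
    ring
  -- basic facts about X
  have hXne : X.Nonempty := by
    refine ⟨0, (0 : Fin 2 → ℝ), 0, ?_, ?_⟩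
    · simp
    · simp [hfa, hdot, frob2]
  have hXbdd : BddAbove X := by
    by_contra hc
    rw [Real.sSup_of_not_bddAbove hc] at hh
    norm_num at hh
  have hub : ∀ s0 s1 ψ : ℝ, s0^2 + s1^2 ≤ 1 →
      (ε 0 0 * s0^2 + (ε 0 1 + ε 1 0) * (s0*s1) + ε 1 1 * s1^2
        + ψ*(ϑ 0 * s0 + ϑ 1 * s1)) / (1+ψ^2) ≤ 1 := by
    intro s0 s1 ψ hle
    have hmem : (ε 0 0 * s0^2 + (ε 0 1 + ε 1 0) * (s0*s1) + ε 1 1 * s1^2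
        + ψ*(ϑ 0 * s0 + ϑ 1 * s1)) / (1+ψ^2) ∈ X := by
      refine ⟨![s0, s1], ψ, ?_, ?_⟩
      · rw [hsum]; simpa using hle
      · rw [hfa, hdot]; norm_num
    have h := le_csSup hXbdd hmem
    rwa [hh] at h
  -- upper bound for Y
  have hYub : ∀ y ∈ Y, y ≤ 1 := by
    rintro y ⟨τ, hfeas, rfl⟩
    rw [hYf τ]
    rw [hGf τ] at hfeas
    exact auxA _ _ _ _ _ _ _ hub hfeas
  have hYne : (0 : ℝ) ∈ Y := by
    refine ⟨(0 : Fin 2 → ℝ), ?_, ?_⟩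
    · rw [hGf]; norm_num
    · rw [hYf]; norm_num
  have hYbdd : BddAbove Y := ⟨1, fun y hy => hYub y hy⟩
  refine le_antisymm (Real.sSup_le hYub (by norm_num)) ?_
  -- lower bound
  refine le_of_forall_pos_le_add ?_
  intro η hη
  set K : ℝ := ((|ϑ 0| + |ϑ 1|)/2)^2 with hKdef
  have hK0 : (0:ℝ) ≤ K := hKdef ▸ by positivity
  set δ : ℝ := min (1/4) (η/(4*K+2)) with hδdef
  have hδpos : 0 < δ := lt_min (by norm_num) (by positivity)
  have hδ4 : δ ≤ 1/4 := min_le_left _ _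
  have hδη : δ*(4*K+2) ≤ η := by
    have h1 : δ ≤ η/(4*K+2) := min_le_right _ _
    have h2 : (0:ℝ) < 4*K+2 := by linarith
    calc δ*(4*K+2) ≤ (η/(4*K+2))*(4*K+2) := by
          exact mul_le_mul_of_nonneg_right h1 h2.le
      _ = η := by field_simp
  have h1δ : 1 - δ < sSup X := by rw [hh]; linarith
  obtain ⟨x, hxX, hxgt⟩ := exists_lt_of_lt_csSup hXne h1δ
  obtain ⟨τ, ψ, hτ, rfl⟩ := hxX
  rw [hfa, hdot, hsum] at *
  obtain ⟨s0, s1, hfeas, hylb⟩ := auxB (ε 0 0) (ε 0 1 + ε 1 0) (ε 1 1) (ϑ 0) (ϑ 1)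
    (τ 0) (τ 1) ψ δ hδpos hδ4 hτ hub hxgt
  have hyY : (ε 0 0 * s0^2 + (ε 0 1 + ε 1 0) * (s0*s1) + ε 1 1 * s1^2
      + (ϑ 0 * s0 + ϑ 1 * s1)^2/2) ∈ Y := by
    refine ⟨![s0, s1], ?_, ?_⟩
    · rw [hGf]; simpa using hfeas
    · rw [hYf]; norm_num
  have hle := le_csSup hYbdd hyY
  have : 1 - δ*(4*K+2) ≤ ε 0 0 * s0^2 + (ε 0 1 + ε 1 0) * (s0*s1) + ε 1 1 * s1^2
      + (ϑ 0 * s0 + ϑ 1 * s1)^2/2 := by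
    rw [hKdef]; exact hylb
  linarith
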